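/- Let S be an inverse semigroup, τ a congruence on E(S), and C(τ) = { a ∈ N(τ) : ∃ e ∈ E(S), e τ a⁻¹a and ae = e }. Then C(τ) is self conjugate in N(τ): for all a ∈ C(τ) and b ∈ N(τ), bab⁻¹ ∈ C(τ). -/
import Mathlib


class InverseSemigroup (S : Type*) extends Semigroup S where
  inv : S → S
  mul_inv_mul : ∀ a : S, a * inv a * a = a
  inv_mul_inv : ∀ a : S, inv a * a * inv a = inv a
  inv_unique : ∀ a b : S, a * b * a = a → b * a * b = b → b = inv a

open InverseSemigroup

/-- `e` is an idempotent. -/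
def IsIdem {S : Type*} [Mul S] (e : S) : Prop := e * e = e

/-- `r` is a left congruence: an equivalence relation compatible with left multiplication. -/
def IsLeftCongruence {S : Type*} [Semigroup S] (r : S → S → Prop) : Prop :=
  Equivalence r ∧ ∀ a b c : S, r a b → r (c * a) (c * b)

/-- The inverse kernel of a relation: elements related to `a * a⁻¹`. -/
def InK {S : Type*} [InverseSemigroup S] (r : S → S → Prop) : Set S :=
  {a | r a (a * inv a)}

/-- The kernel: elements related to some idempotent. -/
def lker {S : Type*} [InverseSemigroup S] (r : S → S → Prop) : Set S :=
  {a | ∃ e, IsIdem e ∧ r a e}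

/-- `τ` is a congruence on the semilattice of idempotents `E(S)`. -/
def IsECong {S : Type*} [InverseSemigroup S] (τ : S → S → Prop) : Prop :=
  (∀ e f, τ e f → IsIdem e ∧ IsIdem f) ∧
  (∀ e, IsIdem e → τ e e) ∧
  (∀ e f, τ e f → τ f e) ∧
  (∀ e f g, τ e f → τ f g → τ e g) ∧
  (∀ e f g, IsIdem g → τ e f → τ (g * e) (g * f))

/-- The normaliser of a congruence on the idempotents. -/
def normaliser {S : Type*} [InverseSemigroup S] (τ : S → S → Prop) : Set S :=
  {a | ∀ e f, τ e f → τ (a * e * inv a) (a * f * inv a) ∧ τ (inv a * e * a) (inv a * f * a)}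

/-- `T` is a full inverse subsemigroup of `S`. -/
def IsFullInverseSub {S : Type*} [InverseSemigroup S] (T : Set S) : Prop :=
  (∀ e : S, IsIdem e → e ∈ T) ∧ (∀ a b, a ∈ T → b ∈ T → a * b ∈ T) ∧
  (∀ a, a ∈ T → inv a ∈ T)

/-- The centraliser of a congruence on the idempotents. -/
def centraliser {S : Type*} [InverseSemigroup S] (τ : S → S → Prop) : Set S :=
  {a | a ∈ normaliser τ ∧ ∃ e, IsIdem e ∧ τ e (InverseSemigroup.inv a * a) ∧ a * e = e}


section Aux

variable {S : Type*} [InverseSemigroup S]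

private lemma inv_invol (a : S) : inv (inv a) = a :=
  (inv_unique (inv a) a (inv_mul_inv a) (mul_inv_mul a)).symm

private lemma inv_idem {e : S} (he : IsIdem e) : inv e = e :=
  (inv_unique e e (by rw [he, he]) (by rw [he, he])).symm

private lemma idem_inv_mul (a : S) : IsIdem (inv a * a) := by
  show inv a * a * (inv a * a) = inv a * a
  calc inv a * a * (inv a * a) = (inv a * a * inv a) * a := by simp only [mul_assoc]
    _ = inv a * a := by rw [inv_mul_inv]

private lemma idem_mul_inv (a : S) : IsIdem (a * inv a) := by
  show a * inv a * (a * inv a) = a * inv a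
  calc a * inv a * (a * inv a) = (a * inv a * a) * inv a := by simp only [mul_assoc]
    _ = a * inv a := by rw [mul_inv_mul]

private lemma il {e : S} (he : IsIdem e) (x : S) : e * (e * x) = e * x := by
  rw [← mul_assoc, he]

private lemma idem_mul {e f : S} (he : IsIdem e) (hf : IsIdem f) : IsIdem (e * f) := by
  have h1 : (e * f) * (f * inv (e * f) * e) * (e * f) = e * f := by
    have h := mul_inv_mul (e * f)
    simp only [mul_assoc] at h ⊢
    rw [il hf, il he]
    exact h
  have key : inv (e * f) * (e * (f * inv (e * f))) = inv (e * f) := by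
    have h := inv_mul_inv (e * f)
    simp only [mul_assoc] at h
    exact h
  have key' : inv (e * f) * (e * (f * (inv (e * f) * e))) = inv (e * f) * e := by
    have h := congrArg (fun x => x * e) key
    simp only [mul_assoc] at h
    exact h
  have h2 : (f * inv (e * f) * e) * (e * f) * (f * inv (e * f) * e) = f * inv (e * f) * e := by
    simp only [mul_assoc]
    rw [il he, il hf, key']
  have hb1 : f * inv (e * f) * e = inv (e * f) := inv_unique (e * f) _ h1 h2
  have hbid : IsIdem (inv (e * f)) := by
    show inv (e * f) * inv (e * f) = inv (e * f)
    calc inv (e * f) * inv (e * f) = (f * inv (e * f) * e) * (f * inv (e * f) * e) := by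
          rw [hb1]
      _ = f * (inv (e * f) * (e * (f * (inv (e * f) * e)))) := by simp only [mul_assoc]
      _ = f * (inv (e * f) * e) := by rw [key']
      _ = f * inv (e * f) * e := by rw [mul_assoc]
      _ = inv (e * f) := hb1
  have hef : e * f = inv (e * f) := by
    conv_lhs => rw [← inv_invol (e * f), inv_idem hbid]
  rw [hef]
  exact hbid

private lemma idem_comm {e f : S} (he : IsIdem e) (hf : IsIdem f) : e * f = f * e := by
  have hef : IsIdem (e * f) := idem_mul he hf
  have hfe : IsIdem (f * e) := idem_mul hf he
  have h1 : (e * f) * (f * e) * (e * f) = e * f := by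
    have h := hef
    unfold IsIdem at h
    simp only [mul_assoc] at h ⊢
    rw [il hf, il he]
    exact h
  have h2 : (f * e) * (e * f) * (f * e) = f * e := by
    have h := hfe
    unfold IsIdem at h
    simp only [mul_assoc] at h ⊢
    rw [il he, il hf]
    exact h
  have := inv_unique (e * f) (f * e) h1 h2
  rw [← inv_idem hef]
  exact this.symm

private lemma inv_mul_rev (a b : S) : inv (a * b) = inv b * inv a := by
  have hcomm := idem_comm (idem_mul_inv b) (idem_inv_mul a)
  have h1 : (a * b) * (inv b * inv a) * (a * b) = a * b := by
    calc (a * b) * (inv b * inv a) * (a * b)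
        = a * ((b * inv b) * (inv a * a)) * b := by simp only [mul_assoc]
      _ = a * ((inv a * a) * (b * inv b)) * b := by rw [hcomm]
      _ = (a * inv a * a) * (b * inv b * b) := by simp only [mul_assoc]
      _ = a * b := by rw [mul_inv_mul, mul_inv_mul]
  have h2 : (inv b * inv a) * (a * b) * (inv b * inv a) = inv b * inv a := by
    calc (inv b * inv a) * (a * b) * (inv b * inv a)
        = inv b * ((inv a * a) * (b * inv b)) * inv a := by simp only [mul_assoc]
      _ = inv b * ((b * inv b) * (inv a * a)) * inv a := by rw [hcomm]
      _ = (inv b * b * inv b) * (inv a * a * inv a) := by simp only [mul_assoc]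
      _ = inv b * inv a := by rw [inv_mul_inv, inv_mul_inv]
  exact (inv_unique (a * b) (inv b * inv a) h1 h2).symm

private lemma idem_conj {e : S} (he : IsIdem e) (b : S) : IsIdem (b * e * inv b) := by
  have hg : IsIdem (inv b * b) := idem_inv_mul b
  have hbg : b * (inv b * b) = b := by rw [← mul_assoc, mul_inv_mul]
  show (b * e * inv b) * (b * e * inv b) = b * e * inv b
  calc (b * e * inv b) * (b * e * inv b)
      = b * ((e * (inv b * b)) * e) * inv b := by simp only [mul_assoc]
    _ = b * (((inv b * b) * e) * e) * inv b := by rw [idem_comm he hg]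
    _ = b * ((inv b * b) * (e * e)) * inv b := by simp only [mul_assoc]
    _ = b * ((inv b * b) * e) * inv b := by rw [he]
    _ = (b * (inv b * b)) * (e * inv b) := by simp only [mul_assoc]
    _ = b * (e * inv b) := by rw [hbg]
    _ = b * e * inv b := by rw [mul_assoc]

end Aux

theorem stmt10 {S : Type*} [InverseSemigroup S] (τ : S → S → Prop)
    (hτ : IsECong τ) :
    ∀ a b : S, a ∈ centraliser τ → b ∈ normaliser τ →
      b * a * inv b ∈ centraliser τ := by

  obtain ⟨hidem, hrefl, hsymm, htrans, hcongr⟩ := hτ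
  intro a b ha hb
  obtain ⟨haN, e, he, hek, hae⟩ := ha
  have hic : inv (b * a * inv b) = b * inv a * inv b := by
    rw [inv_mul_rev, inv_mul_rev, inv_invol, mul_assoc]
  -- c := b * a * inv b is in the normaliser
  have hcN : b * a * inv b ∈ normaliser τ := by
    intro e' f' hef
    have h2 := (hb e' f' hef).2
    have h3 := (haN _ _ h2).1
    have h4 := (haN _ _ h2).2
    have h5 := (hb _ _ h3).1
    have h7 := (hb _ _ h4).1
    constructor
    · have heq1 : ∀ x : S,
          (b * a * inv b) * x * inv (b * a * inv b) = b * (a * (inv b * x * b) * inv a) * inv b := by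
        intro x; rw [hic]; simp only [mul_assoc]
      rw [heq1 e', heq1 f']
      exact h5
    · have heq2 : ∀ x : S,
          inv (b * a * inv b) * x * (b * a * inv b) = b * (inv a * (inv b * x * b) * a) * inv b := by
        intro x; rw [hic]; simp only [mul_assoc]
      rw [heq2 e', heq2 f']
      exact h7
  refine ⟨hcN, (b * e * inv b) * ((b * inv a * inv b) * (b * a * inv b)), ?_, ?_, ?_⟩
  · -- idempotent
    have hC : IsIdem ((b * inv a * inv b) * (b * a * inv b)) := by
      have h := idem_inv_mul (b * a * inv b)
      rwa [hic] at h
    exact idem_mul (idem_conj he b) hC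
  · -- τ-related to inv c * c
    rw [hic]
    have hC : IsIdem ((b * inv a * inv b) * (b * a * inv b)) := by
      have h := idem_inv_mul (b * a * inv b)
      rwa [hic] at h
    have hbeb : IsIdem (b * e * inv b) := idem_conj he b
    have ha_k : a * (inv a * a) = a := by rw [← mul_assoc, mul_inv_mul]
    have hg_invb : (inv b * b) * inv b = inv b := inv_mul_inv b
    have E1 : ((b * inv a * inv b) * (b * a * inv b)) * (b * (inv a * a) * inv b)
        = (b * inv a * inv b) * (b * a * inv b) := by
      have hgk := idem_comm (idem_inv_mul b) (idem_inv_mul a)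
      calc ((b * inv a * inv b) * (b * a * inv b)) * (b * (inv a * a) * inv b)
          = b * inv a * (inv b * b) * (a * ((inv b * b) * (inv a * a))) * inv b := by
            simp only [mul_assoc]
        _ = b * inv a * (inv b * b) * (a * ((inv a * a) * (inv b * b))) * inv b := by rw [hgk]
        _ = b * inv a * (inv b * b) * ((a * (inv a * a)) * ((inv b * b) * inv b)) := by
            simp only [mul_assoc]
        _ = b * inv a * (inv b * b) * (a * inv b) := by rw [ha_k, hg_invb]
        _ = (b * inv a * inv b) * (b * a * inv b) := by simp only [mul_assoc]
    have t1 : τ (b * e * inv b) (b * (inv a * a) * inv b) := (hb e (inv a * a) hek).1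
    have t2 := hcongr _ _ _ hC t1
    rw [E1, idem_comm hC hbeb] at t2
    exact t2
  · -- absorbed by c
    have hge := idem_comm (idem_inv_mul b) he
    have hg_invb : (inv b * b) * inv b = inv b := inv_mul_inv b
    have E2 : (b * a * inv b) * (b * e * inv b) = b * e * inv b := by
      calc (b * a * inv b) * (b * e * inv b)
          = b * (a * ((inv b * b) * e)) * inv b := by simp only [mul_assoc]
        _ = b * (a * (e * (inv b * b))) * inv b := by rw [hge]
        _ = b * ((a * e) * ((inv b * b) * inv b)) := by simp only [mul_assoc]
        _ = b * (e * inv b) := by rw [hae, hg_invb]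
        _ = b * e * inv b := by rw [mul_assoc]
    calc (b * a * inv b) * ((b * e * inv b) * ((b * inv a * inv b) * (b * a * inv b)))
        = ((b * a * inv b) * (b * e * inv b)) * ((b * inv a * inv b) * (b * a * inv b)) := by
          simp only [mul_assoc]
      _ = (b * e * inv b) * ((b * inv a * inv b) * (b * a * inv b)) := by rw [E2]
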